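/- arXiv:2304.02241 — 2 statements merged into one kernel-verified Lean document; each statement's English description precedes it below -/
import Mathlib

section
/- With the coherent oracle c𝔘 as defined in the context, for every w ∈ W and every k ∈ Fin N, c𝔘 applied to |1⟩ ⊗ u ⊗ w ⊗ k̂ equals |1⟩ ⊗ u ⊗ w ⊗ ((k+1) mod N)̂, where k̂ denotes the Fourier basis vector (1/√N) ∑_{y ∈ Fin N} ω_N^{k·y} • e_y in EuclideanSpace ℂ (Fin N). That is, each query increments the counter register by one in the Fourier basis when the control qubit is |1⟩ and the eigenstate register holds u. -/
open scoped TensorProduct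

noncomputable section

/-- `ω N = exp(2πi/N)`, the primitive `N`-th root of unity. -/
def ω (N : ℕ) : ℂ := Complex.exp (2 * Real.pi * Complex.I / N)

/-- The computational (standard) basis vector `e_y` of `EuclideanSpace ℂ (Fin N)`. -/
def e (N : ℕ) (y : Fin N) : EuclideanSpace ℂ (Fin N) := EuclideanSpace.single y 1

/-- The Fourier basis vector `k̂ = (1/√N) ∑_y ω_N^{k·y} • e_y`. -/
def fHat (N : ℕ) (k : Fin N) : EuclideanSpace ℂ (Fin N) :=
  (↑(Real.sqrt N))⁻¹ • ∑ y : Fin N, ω N ^ ((k : ℕ) * (y : ℕ)) • e N y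

/-- The rank-one operator `|v⟩⟨w| : x ↦ ⟨w, x⟩ • v`. -/
def outer {E : Type*} [NormedAddCommGroup E] [InnerProductSpace ℂ E] (v w : E) :
    E →ₗ[ℂ] E :=
  LinearMap.toSpanSingleton ℂ E v ∘ₗ (innerSL ℂ w).toLinearMap

variable {V : Type*} [NormedAddCommGroup V] [InnerProductSpace ℂ V] [FiniteDimensional ℂ V]
variable {W : Type*} [NormedAddCommGroup W] [InnerProductSpace ℂ W] [FiniteDimensional ℂ W]

/-- `P_u`, the orthogonal projection onto the line `ℂ ∙ u`, as an endomorphism of `V`. -/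
def Pu (u : V) : V →ₗ[ℂ] V :=
  (ℂ ∙ u).subtype ∘ₗ ((ℂ ∙ u).orthogonalProjectionOnto).toLinearMap

/-- `U_y = ω_N^y • P_u + (id - P_u)` on `V`. -/
def Uy (N : ℕ) (u : V) (y : Fin N) : V →ₗ[ℂ] V :=
  ω N ^ (y : ℕ) • Pu u + (LinearMap.id - Pu u)

/-- The controlled unitary `cU_y = |0⟩⟨0| ⊗ id_V + |1⟩⟨1| ⊗ U_y` on `ℂ² ⊗ V`. -/
def cUy (N : ℕ) (u : V) (y : Fin N) :
    (EuclideanSpace ℂ (Fin 2) ⊗[ℂ] V) →ₗ[ℂ] (EuclideanSpace ℂ (Fin 2) ⊗[ℂ] V) :=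
  TensorProduct.map (outer (e 2 0) (e 2 0)) LinearMap.id
    + TensorProduct.map (outer (e 2 1) (e 2 1)) (Uy N u y)

/-- The coherent oracle `c𝔘 = ∑_y (cU_y ⊗ id_W) ⊗ |e_y⟩⟨e_y|` on
`(ℂ² ⊗ V ⊗ W) ⊗ EuclideanSpace ℂ (Fin N)`. -/
def cOracle (N : ℕ) (u : V) (W : Type*) [NormedAddCommGroup W] [InnerProductSpace ℂ W] :
    (((EuclideanSpace ℂ (Fin 2) ⊗[ℂ] V) ⊗[ℂ] W) ⊗[ℂ] EuclideanSpace ℂ (Fin N)) →ₗ[ℂ]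
    (((EuclideanSpace ℂ (Fin 2) ⊗[ℂ] V) ⊗[ℂ] W) ⊗[ℂ] EuclideanSpace ℂ (Fin N)) :=
  ∑ y : Fin N,
    TensorProduct.map (TensorProduct.map (cUy N u y) LinearMap.id) (outer (e N y) (e N y))


lemma omega_pow_N {N : ℕ} [NeZero N] : ω N ^ N = 1 := by
  have hN : (N : ℂ) ≠ 0 := Nat.cast_ne_zero.mpr (NeZero.ne N)
  rw [ω, ← Complex.exp_nat_mul, mul_comm, div_mul_cancel₀ _ hN]
  simpa using Complex.exp_two_pi_mul_I

lemma omega_pow_mod {N : ℕ} [NeZero N] (a : ℕ) : ω N ^ a = ω N ^ (a % N) :=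
  pow_eq_pow_mod a omega_pow_N

lemma Pu_apply_self {V : Type*} [NormedAddCommGroup V] [InnerProductSpace ℂ V]
    [FiniteDimensional ℂ V] (u : V) : Pu u u = u := by
  simp only [Pu, LinearMap.coe_comp, Function.comp_apply, Submodule.coe_subtype,
    ContinuousLinearMap.coe_coe]
  exact Submodule.starProjection_eq_self_iff.mpr (Submodule.mem_span_singleton_self u)

lemma Uy_apply_self {V : Type*} [NormedAddCommGroup V] [InnerProductSpace ℂ V]
    [FiniteDimensional ℂ V] {N : ℕ} (u : V) (y : Fin N) :
    Uy N u y u = ω N ^ (y : ℕ) • u := by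
  simp [Uy, Pu_apply_self]

lemma outer_e_apply {n : ℕ} (i j : Fin n) :
    outer (e n i) (e n i) (e n j) = if i = j then e n i else 0 := by
  simp only [outer, LinearMap.coe_comp, Function.comp_apply,
    ContinuousLinearMap.coe_coe, innerSL_apply_apply, LinearMap.toSpanSingleton_apply, e]
  rw [EuclideanSpace.inner_single_left]
  by_cases h : i = j <;> simp [h, EuclideanSpace.single_apply]

lemma cUy_apply_one {V : Type*} [NormedAddCommGroup V] [InnerProductSpace ℂ V]
    [FiniteDimensional ℂ V] {N : ℕ} (u : V) (y : Fin N) :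
    cUy N u y (e 2 1 ⊗ₜ[ℂ] u) = ω N ^ (y : ℕ) • (e 2 1 ⊗ₜ[ℂ] u) := by
  have h0 : outer (e 2 0) (e 2 0) (e 2 1) = 0 := by
    simpa using outer_e_apply (n := 2) 0 1
  have h1 : outer (e 2 1) (e 2 1) (e 2 1) = e 2 1 := by
    simpa using outer_e_apply (n := 2) 1 1
  simp [cUy, TensorProduct.map_tmul, h0, h1, Uy_apply_self, TensorProduct.tmul_smul]

/-- Each query increments the counter register by one in the Fourier basis when the control
qubit is `|1⟩` and the eigenstate register holds `u`:
`c𝔘 (|1⟩ ⊗ u ⊗ w ⊗ k̂) = |1⟩ ⊗ u ⊗ w ⊗ ((k+1) mod N)^`. -/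
theorem stmt_3 {N : ℕ} [NeZero N] (u : V) (hu : ‖u‖ = 1) (w : W) (k : Fin N) :
    cOracle N u W (((e 2 1 ⊗ₜ[ℂ] u) ⊗ₜ[ℂ] w) ⊗ₜ[ℂ] fHat N k)
      = ((e 2 1 ⊗ₜ[ℂ] u) ⊗ₜ[ℂ] w) ⊗ₜ[ℂ] fHat N (k + 1) := by
  have key : ∀ y' : Fin N,
      cOracle N u W (((e 2 1 ⊗ₜ[ℂ] u) ⊗ₜ[ℂ] w) ⊗ₜ[ℂ] e N y')
        = ω N ^ (y' : ℕ) • (((e 2 1 ⊗ₜ[ℂ] u) ⊗ₜ[ℂ] w) ⊗ₜ[ℂ] e N y') := by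
    intro y'
    rw [cOracle, LinearMap.sum_apply, Finset.sum_eq_single y']
    · simp [TensorProduct.map_tmul, outer_e_apply, cUy_apply_one,
        TensorProduct.smul_tmul, TensorProduct.tmul_smul]
    · intro b _ hb
      simp [TensorProduct.map_tmul, outer_e_apply, hb]
    · simp
  rw [fHat, fHat, TensorProduct.tmul_smul, TensorProduct.tmul_smul,
    LinearMap.map_smul_of_tower]
  congr 1
  rw [TensorProduct.tmul_sum, TensorProduct.tmul_sum, map_sum]
  apply Finset.sum_congr rfl
  intro y _
  rw [TensorProduct.tmul_smul, map_smul, key, smul_smul, TensorProduct.tmul_smul,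
    ← pow_add]
  congr 1
  have hk : ((k + 1 : Fin N) : ℕ) = ((k : ℕ) + 1) % N := by
    simp [Fin.add_def]
  rw [hk, omega_pow_mod ((k : ℕ) * (y : ℕ) + (y : ℕ)),
    omega_pow_mod ((((k : ℕ) + 1) % N) * (y : ℕ))]
  congr 1
  have : ((k : ℕ) + 1) % N * (y : ℕ) ≡ ((k : ℕ) + 1) * (y : ℕ) [MOD N] :=
    (Nat.mod_modEq _ _).mul_right _
  calc ((k : ℕ) * (y : ℕ) + (y : ℕ)) % N = (((k : ℕ) + 1) * (y : ℕ)) % N := by ring_nf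
    _ = (((k : ℕ) + 1) % N * (y : ℕ)) % N := this.symm
end
end

section
/- Let H be a finite-dimensional complex inner product space, N ≥ 1, and 0 ≤ q ≤ N−1. Let (Π_y)_{y ∈ Fin N} be orthogonal projections on H with pairwise orthogonal ranges (Π_y ∘ Π_{y'} = 0 for y ≠ y'). Let ψ := ∑_{k=0}^{q} α_k • (ψ_k ⊗ k̂) ∈ H ⊗ EuclideanSpace ℂ (Fin N), where each ψ_k ∈ H is a unit vector, the α_k ∈ ℂ satisfy ∑_{k=0}^{q} |α_k|² ≤ 1, and k̂ is the k-th Fourier basis vector. Then ∑_{y ∈ Fin N} ‖(Π_y ⊗ |e_y⟩⟨e_y|) ψ‖² ≤ (q+1)/N. -/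
open scoped Kronecker Matrix

noncomputable section

/-- The tensor product of two Euclidean vectors, realized concretely:
`(x ⊗ z) (i, j) = x i * z j`. -/
def tp {ι κ : Type*} [Fintype ι] [Fintype κ]
    (x : EuclideanSpace ℂ ι) (z : EuclideanSpace ℂ κ) : EuclideanSpace ℂ (ι × κ) :=
  (EuclideanSpace.equiv (ι × κ) ℂ).symm fun p => x p.1 * z p.2


lemma tp_apply {ι κ : Type*} [Fintype ι] [Fintype κ]
    (x : EuclideanSpace ℂ ι) (z : EuclideanSpace ℂ κ) (p : ι × κ) :
    tp x z p = x p.1 * z p.2 := rfl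

lemma tp_smul_left {ι κ : Type*} [Fintype ι] [Fintype κ] (c : ℂ)
    (x : EuclideanSpace ℂ ι) (z : EuclideanSpace ℂ κ) : tp (c • x) z = c • tp x z := by
  ext p; simp [tp_apply, mul_assoc]

lemma tp_smul_right {ι κ : Type*} [Fintype ι] [Fintype κ] (c : ℂ)
    (x : EuclideanSpace ℂ ι) (z : EuclideanSpace ℂ κ) : tp x (c • z) = c • tp x z := by
  ext p; simp [tp_apply]; ring

def tpL {ι κ : Type*} [Fintype ι] [Fintype κ] (z : EuclideanSpace ℂ κ) :
    EuclideanSpace ℂ ι →ₗ[ℂ] EuclideanSpace ℂ (ι × κ) where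
  toFun x := tp x z
  map_add' x x' := by ext p; simp [tp_apply, PiLp.add_apply, add_mul]
  map_smul' c x := tp_smul_left c x z

lemma tp_sum_left {ι κ γ : Type*} [Fintype ι] [Fintype κ] (s : Finset γ)
    (f : γ → EuclideanSpace ℂ ι) (z : EuclideanSpace ℂ κ) :
    tp (∑ k ∈ s, f k) z = ∑ k ∈ s, tp (f k) z := map_sum (tpL z) f s

lemma toEuclideanLin_apply' {ι κ : Type*} [Fintype ι] [Fintype κ] [DecidableEq κ]
    (M : Matrix ι κ ℂ) (v : EuclideanSpace ℂ κ) (i : ι) :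
    Matrix.toEuclideanLin M v i = ∑ j, M i j * v j := by
  rw [Matrix.toEuclideanLin_apply]; rfl

lemma tp_kron {ι κ : Type*} [Fintype ι] [Fintype κ] [DecidableEq ι] [DecidableEq κ]
    (A : Matrix ι ι ℂ) (B : Matrix κ κ ℂ)
    (x : EuclideanSpace ℂ ι) (z : EuclideanSpace ℂ κ) :
    Matrix.toEuclideanLin (A ⊗ₖ B) (tp x z)
      = tp (Matrix.toEuclideanLin A x) (Matrix.toEuclideanLin B z) := by
  ext p
  rw [toEuclideanLin_apply', tp_apply, toEuclideanLin_apply', toEuclideanLin_apply',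
    Fintype.sum_prod_type, Finset.sum_mul_sum]
  refine Finset.sum_congr rfl fun i _ => Finset.sum_congr rfl fun j _ => ?_
  simp only [Matrix.kroneckerMap_apply, tp_apply]
  ring

lemma tp_norm {ι κ : Type*} [Fintype ι] [Fintype κ]
    (x : EuclideanSpace ℂ ι) (z : EuclideanSpace ℂ κ) :
    ‖tp x z‖ = ‖x‖ * ‖z‖ := by
  have h := EuclideanSpace.norm_eq (tp x z)
  rw [h, EuclideanSpace.norm_eq x, EuclideanSpace.norm_eq z, ← Real.sqrt_mul (by positivity)]
  congr 1
  rw [Fintype.sum_prod_type, Finset.sum_mul_sum]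
  refine Finset.sum_congr rfl fun i _ => Finset.sum_congr rfl fun j _ => ?_
  rw [tp_apply (p := (i, j))]
  simp [mul_pow]

lemma fHat_apply (N : ℕ) (k y : Fin N) :
    fHat N k y = (↑(Real.sqrt N))⁻¹ * ω N ^ ((k : ℕ) * (y : ℕ)) := by
  simp only [fHat, PiLp.smul_apply, smul_eq_mul]
  rw [show (∑ x : Fin N, ω N ^ ((k:ℕ) * (x:ℕ)) • e N x) y
      = ∑ x : Fin N, (ω N ^ ((k:ℕ) * (x:ℕ)) • e N x) y by rw [WithLp.ofLp_sum, Finset.sum_apply]]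
  simp [e, EuclideanSpace.single_apply]

lemma stdBasis_toE {N : ℕ} [NeZero N] (y : Fin N) (z : EuclideanSpace ℂ (Fin N)) :
    Matrix.toEuclideanLin (Matrix.single y y (1 : ℂ)) z = z y • e N y := by
  ext i
  rw [toEuclideanLin_apply']
  simp [Matrix.single, e, EuclideanSpace.single_apply, ite_and, eq_comm]

lemma norm_omega_pow (N m : ℕ) : ‖ω N ^ m‖ = 1 := by
  rw [norm_pow]
  have : ‖ω N‖ = 1 := by
    rw [ω, Complex.norm_exp]
    have : (2 * ↑Real.pi * Complex.I / ↑N).re = 0 := by simp [Complex.div_re]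
    rw [this, Real.exp_zero]
  rw [this, one_pow]

lemma toEuclideanLin_mul {ι : Type*} [Fintype ι] [DecidableEq ι]
    (A B : Matrix ι ι ℂ) (x : EuclideanSpace ℂ ι) :
    Matrix.toEuclideanLin (A * B) x
      = Matrix.toEuclideanLin A (Matrix.toEuclideanLin B x) := by
  simp [Matrix.toEuclideanLin_apply, Matrix.mulVec_mulVec]

lemma inner_toEuclideanLin_left {ι : Type*} [Fintype ι] [DecidableEq ι]
    (A : Matrix ι ι ℂ) (x v : EuclideanSpace ℂ ι) :
    (inner ℂ (Matrix.toEuclideanLin A x) v : ℂ) = inner ℂ x (Matrix.toEuclideanLin Aᴴ v) := by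
  rw [Matrix.toEuclideanLin_conjTranspose_eq_adjoint, LinearMap.adjoint_inner_right]

lemma sum_proj_le {ι : Type*} [Fintype ι] [DecidableEq ι] {N : ℕ}
    (P : Fin N → Matrix ι ι ℂ)
    (hP_sa : ∀ y, (P y)ᴴ = P y) (hP_idem : ∀ y, P y * P y = P y)
    (hP_orth : ∀ y y', y ≠ y' → P y * P y' = 0) (x : EuclideanSpace ℂ ι) :
    ∑ y, ‖Matrix.toEuclideanLin (P y) x‖ ^ 2 ≤ ‖x‖ ^ 2 := by
  set S : Matrix ι ι ℂ := ∑ y, P y with hS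
  have cross : ∀ y y' : Fin N,
      (inner ℂ (Matrix.toEuclideanLin (P y) x) (Matrix.toEuclideanLin (P y') x) : ℂ)
        = if y = y' then (‖Matrix.toEuclideanLin (P y) x‖ : ℂ) ^ 2 else 0 := by
    intro y y'
    split_ifs with h
    · subst h; rw [inner_self_eq_norm_sq_to_K]; norm_cast
    · rw [inner_toEuclideanLin_left, hP_sa, ← toEuclideanLin_mul, hP_orth y y' h]
      simp
  have hSx : Matrix.toEuclideanLin S x = ∑ y, Matrix.toEuclideanLin (P y) x := by
    simp [hS, map_sum]
  have h1 : (inner ℂ (Matrix.toEuclideanLin S x) (Matrix.toEuclideanLin S x) : ℂ)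
      = ∑ y, (‖Matrix.toEuclideanLin (P y) x‖ : ℂ) ^ 2 := by
    rw [hSx, sum_inner]
    rw [Finset.sum_congr rfl fun y _ => inner_sum _ _ _]
    rw [Finset.sum_congr rfl fun y _ => Finset.sum_congr rfl fun y' _ => cross y y']
    simp
  have key : (‖Matrix.toEuclideanLin S x‖ : ℝ) ^ 2 = ∑ y, ‖Matrix.toEuclideanLin (P y) x‖ ^ 2 := by
    rw [← inner_self_eq_norm_sq (𝕜 := ℂ), h1]
    norm_cast
  rw [← key]
  have hSsa : Sᴴ = S := by
    rw [hS, Matrix.conjTranspose_sum]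
    exact Finset.sum_congr rfl fun y _ => hP_sa y
  have hS2 : S * S = S := by
    rw [hS, Finset.sum_mul_sum]
    refine Finset.sum_congr rfl fun y _ => ?_
    rw [Finset.sum_eq_single y (fun y' _ h => hP_orth y y' (Ne.symm h)) (by simp)]
    exact hP_idem y
  have hb : ‖Matrix.toEuclideanLin S x‖ ≤ ‖x‖ := by
    rcases eq_or_ne (Matrix.toEuclideanLin S x) 0 with h0 | h0
    · rw [h0]; simp [norm_nonneg]
    · have h2 : (‖Matrix.toEuclideanLin S x‖ : ℝ) ^ 2
          = RCLike.re (inner ℂ x (Matrix.toEuclideanLin S x) : ℂ) := by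
        rw [← inner_self_eq_norm_sq (𝕜 := ℂ)]
        congr 1
        rw [inner_toEuclideanLin_left, hSsa, ← toEuclideanLin_mul, hS2]
      have h3 : RCLike.re (inner ℂ x (Matrix.toEuclideanLin S x) : ℂ)
          ≤ ‖x‖ * ‖Matrix.toEuclideanLin S x‖ := re_inner_le_norm _ _
      have h4 : ‖Matrix.toEuclideanLin S x‖ ^ 2 ≤ ‖x‖ * ‖Matrix.toEuclideanLin S x‖ :=
        h2 ▸ h3
      have hpos : 0 < ‖Matrix.toEuclideanLin S x‖ := norm_pos_iff.mpr h0
      nlinarith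
  exact pow_le_pow_left₀ (norm_nonneg _) hb 2


/-- If `ψ = ∑_{k=0}^q α_k • (ψ_k ⊗ k̂)` with unit vectors `ψ_k`, `∑ |α_k|² ≤ 1` and
`0 ≤ q ≤ N-1`, and `(Π_y)_y` are orthogonal projections on `H` with pairwise orthogonal
ranges, then `∑_y ‖(Π_y ⊗ |e_y⟩⟨e_y|) ψ‖² ≤ (q+1)/N`. -/
theorem stmt_8 {ι : Type*} [Fintype ι] [DecidableEq ι] {N : ℕ} [NeZero N]
    {q : ℕ} (hq : q + 1 ≤ N)
    (P : Fin N → Matrix ι ι ℂ)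
    (hP_sa : ∀ y, (P y)ᴴ = P y) (hP_idem : ∀ y, P y * P y = P y)
    (hP_orth : ∀ y y', y ≠ y' → P y * P y' = 0)
    (α : Fin (q + 1) → ℂ) (ψk : Fin (q + 1) → EuclideanSpace ℂ ι)
    (hψk : ∀ k, ‖ψk k‖ = 1) (hα : ∑ k, ‖α k‖ ^ 2 ≤ 1) :
    ∑ y : Fin N,
        ‖Matrix.toEuclideanLin (P y ⊗ₖ Matrix.single y y (1 : ℂ))
          (∑ k : Fin (q + 1), α k • tp (ψk k) (fHat N (Fin.castLE hq k)))‖ ^ 2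
      ≤ ((q : ℝ) + 1) / N := by
  have hN0 : (0:ℝ) < N := by exact_mod_cast Nat.pos_of_ne_zero (NeZero.ne N)
  set v : Fin N → EuclideanSpace ℂ ι :=
    fun y => ∑ k, (α k * ω N ^ ((k : ℕ) * (y : ℕ))) • ψk k with hv
  have hvec : ∀ y : Fin N,
      Matrix.toEuclideanLin (P y ⊗ₖ Matrix.single y y (1 : ℂ))
          (∑ k : Fin (q + 1), α k • tp (ψk k) (fHat N (Fin.castLE hq k)))
        = ((Real.sqrt N : ℂ))⁻¹ • tp (Matrix.toEuclideanLin (P y) (v y)) (e N y) := by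
    intro y
    rw [map_sum]
    have hterm : ∀ k : Fin (q+1),
        Matrix.toEuclideanLin (P y ⊗ₖ Matrix.single y y (1 : ℂ))
            (α k • tp (ψk k) (fHat N (Fin.castLE hq k)))
          = ((Real.sqrt N : ℂ))⁻¹ • ((α k * ω N ^ ((k : ℕ) * (y : ℕ)))
              • tp (Matrix.toEuclideanLin (P y) (ψk k)) (e N y)) := by
      intro k
      rw [map_smul, tp_kron, stdBasis_toE, fHat_apply, tp_smul_right, smul_smul, smul_smul]
      congr 1
      rw [Fin.coe_castLE]
      ring
    rw [Finset.sum_congr rfl fun k _ => hterm k, ← Finset.smul_sum]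
    congr 1
    rw [hv, map_sum, tp_sum_left]
    refine Finset.sum_congr rfl fun k _ => ?_
    rw [map_smul, tp_smul_left]
  have hnorm : ∀ y : Fin N,
      ‖Matrix.toEuclideanLin (P y ⊗ₖ Matrix.single y y (1 : ℂ))
          (∑ k : Fin (q + 1), α k • tp (ψk k) (fHat N (Fin.castLE hq k)))‖ ^ 2
        = ‖Matrix.toEuclideanLin (P y) (v y)‖ ^ 2 / N := by
    intro y
    rw [hvec y, norm_smul, tp_norm]
    have he : ‖e N y‖ = 1 := by
      rw [e, EuclideanSpace.norm_single, norm_one]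
    have hc : ‖((Real.sqrt N : ℂ))⁻¹‖ = (Real.sqrt N)⁻¹ := by
      rw [norm_inv, Complex.norm_real, Real.norm_eq_abs, abs_of_nonneg (Real.sqrt_nonneg _)]
    rw [he, hc, mul_one, mul_pow, inv_pow, Real.sq_sqrt (le_of_lt hN0)]
    ring
  have hvy : ∀ y : Fin N, ‖Matrix.toEuclideanLin (P y) (v y)‖ ^ 2
      ≤ ∑ k, ‖Matrix.toEuclideanLin (P y) (ψk k)‖ ^ 2 := by
    intro y
    have h1 : ‖Matrix.toEuclideanLin (P y) (v y)‖
        ≤ ∑ k, ‖α k‖ * ‖Matrix.toEuclideanLin (P y) (ψk k)‖ := by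
      rw [hv, map_sum]
      refine le_trans (norm_sum_le _ _) (Finset.sum_le_sum fun k _ => ?_)
      rw [map_smul, norm_smul]
      gcongr
      rw [norm_mul]
      have := norm_omega_pow N ((k : ℕ) * (y : ℕ))
      rw [this, mul_one]
    have h2 : (∑ k, ‖α k‖ * ‖Matrix.toEuclideanLin (P y) (ψk k)‖) ^ 2
        ≤ (∑ k, ‖α k‖ ^ 2) * ∑ k, ‖Matrix.toEuclideanLin (P y) (ψk k)‖ ^ 2 :=
      Finset.sum_mul_sq_le_sq_mul_sq Finset.univ _ _
    calc ‖Matrix.toEuclideanLin (P y) (v y)‖ ^ 2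
        ≤ (∑ k, ‖α k‖ * ‖Matrix.toEuclideanLin (P y) (ψk k)‖) ^ 2 := by
          apply pow_le_pow_left₀ (norm_nonneg _) h1
      _ ≤ (∑ k, ‖α k‖ ^ 2) * ∑ k, ‖Matrix.toEuclideanLin (P y) (ψk k)‖ ^ 2 := h2
      _ ≤ 1 * ∑ k, ‖Matrix.toEuclideanLin (P y) (ψk k)‖ ^ 2 := by
          apply mul_le_mul_of_nonneg_right hα
          positivity
      _ = ∑ k, ‖Matrix.toEuclideanLin (P y) (ψk k)‖ ^ 2 := one_mul _
  calc ∑ y : Fin N, ‖Matrix.toEuclideanLin (P y ⊗ₖ Matrix.single y y (1 : ℂ))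
          (∑ k : Fin (q + 1), α k • tp (ψk k) (fHat N (Fin.castLE hq k)))‖ ^ 2
      = ∑ y : Fin N, ‖Matrix.toEuclideanLin (P y) (v y)‖ ^ 2 / N :=
        Finset.sum_congr rfl fun y _ => hnorm y
    _ ≤ ∑ y : Fin N, (∑ k, ‖Matrix.toEuclideanLin (P y) (ψk k)‖ ^ 2) / N := by
        refine Finset.sum_le_sum fun y _ => ?_
        gcongr
        exact hvy y
    _ = (∑ k : Fin (q+1), ∑ y : Fin N, ‖Matrix.toEuclideanLin (P y) (ψk k)‖ ^ 2) / N := by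
        rw [Finset.sum_comm, Finset.sum_div]
    _ ≤ (∑ k : Fin (q+1), (1:ℝ)) / N := by
        gcongr with k
        have := sum_proj_le P hP_sa hP_idem hP_orth (ψk k)
        rwa [hψk k, one_pow] at this
    _ = ((q : ℝ) + 1) / N := by
        simp [Finset.sum_const]

end
end
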